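/- Define rational numbers C_p by C_0 = 1 and Σ_{q=0}^p C_{p−q}/(2q+1)! = 0 for p ≥ 1. Then for all p ≥ 0, C_p = (2 − 2^{2p})·B_{2p}/(2p)!, where B_n denotes the n-th Bernoulli number. -/

import Mathlib

open Finset PowerSeries

lemma series_key :
    (2 * bernoulliPowerSeries ℚ - rescale (2:ℚ) (bernoulliPowerSeries ℚ)) *
      (exp ℚ - rescale (-1:ℚ) (exp ℚ)) = 2 * X := by
  set B := bernoulliPowerSeries ℚ
  set E := exp ℚ
  set F := rescale (-1:ℚ) (exp ℚ)
  have hE : E ≠ 0 := by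
    intro h
    have := congrArg (PowerSeries.constantCoeff (R := ℚ)) h
    simp [E, PowerSeries.exp] at this
  apply mul_right_cancel₀ hE
  have h1 : B * (E - 1) = X := bernoulliPowerSeries_mul_exp_sub_one ℚ
  have h2 : rescale (2:ℚ) B * (E * E - 1) = 2 * X := by
    have : E * E = rescale (2:ℚ) E := by
      have := PowerSeries.exp_mul_exp_eq_exp_add (1:ℚ) 1
      norm_num at this; simpa [rescale_one] using this
    rw [this, ← map_one (rescale (2:ℚ)), ← map_sub, ← map_mul, h1]
    rw [rescale_X]
    have : (PowerSeries.C (R := ℚ)) 2 = 2 := by rw [show (2:ℚ) = 1 + 1 by norm_num, map_add, map_one]; norm_num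
    rw [this]
  have h3 : E * F = 1 := PowerSeries.exp_mul_exp_neg_eq_one (A := ℚ)
  linear_combination 2*(E+1)*h1 - h2 + (rescale (2:ℚ) B - 2*B)*h3

lemma g_odd_zero {k : ℕ} (hk : Odd k) : ((2:ℚ) - 2^k) * bernoulli k = 0 := by
  rcases eq_or_ne k 1 with rfl | h1
  · norm_num
  · have : bernoulli k = 0 := by
      rw [bernoulli_eq_bernoulli'_of_ne_one h1]
      exact bernoulli'_eq_zero_of_odd hk (lt_of_le_of_ne hk.pos (Ne.symm h1))
    rw [this, mul_zero]

lemma sum_range_even (f : ℕ → ℚ) (n : ℕ) (h : ∀ k, Odd k → f k = 0) :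
    ∑ k ∈ range (2*n), f k = ∑ m ∈ range n, f (2*m) := by
  induction n with
  | zero => simp
  | succ n ih =>
    rw [mul_add, mul_one, show 2*n+2 = (2*n+1)+1 from rfl, Finset.sum_range_succ,
      Finset.sum_range_succ, ih, Finset.sum_range_succ, h (2*n+1) ⟨n, by ring⟩, add_zero]

lemma key (p : ℕ) (hp : 1 ≤ p) :
    ∑ q ∈ Finset.range (p + 1),
      ((2 - 2 ^ (2*(p-q))) * bernoulli (2*(p-q)) / ((2*(p-q)).factorial : ℚ))
        / ((2*q+1).factorial : ℚ) = 0 := by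
  have h := congrArg (PowerSeries.coeff (R := ℚ) (2*p+1)) series_key
  rw [PowerSeries.coeff_mul, Finset.Nat.sum_antidiagonal_eq_sum_range_succ_mk] at h
  have hG : ∀ k : ℕ, PowerSeries.coeff (R := ℚ) k
      (2 * bernoulliPowerSeries ℚ - rescale (2:ℚ) (bernoulliPowerSeries ℚ))
      = (2 - 2^k) * bernoulli k / (k.factorial : ℚ) := by
    intro k
    rw [map_sub, PowerSeries.coeff_rescale]
    have h2 : (2 : ℚ⟦X⟧) = PowerSeries.C (R := ℚ) 2 := by
      rw [show (2:ℚ) = 1 + 1 by norm_num, map_add, map_one]; norm_num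
    rw [h2, PowerSeries.coeff_C_mul]
    simp [bernoulliPowerSeries, PowerSeries.coeff_mk]
    ring
  have hEF : ∀ m : ℕ, PowerSeries.coeff (R := ℚ) m (exp ℚ - rescale (-1:ℚ) (exp ℚ))
      = (1 - (-1:ℚ)^m) / (m.factorial : ℚ) := by
    intro m
    rw [map_sub, PowerSeries.coeff_rescale, PowerSeries.coeff_exp]
    simp only [Algebra.algebraMap_self, RingHom.id_apply]
    ring
  simp only [hG, hEF] at h
  have hX : PowerSeries.coeff (R := ℚ) (2*p+1) (2 * PowerSeries.X : ℚ⟦X⟧) = 0 := by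
    have h2 : (2 : ℚ⟦X⟧) = PowerSeries.C (R := ℚ) 2 := by
      rw [show (2:ℚ) = 1 + 1 by norm_num, map_add, map_one]; norm_num
    rw [h2, PowerSeries.coeff_C_mul, PowerSeries.coeff_X, if_neg (by omega)]
    simp
  rw [hX, show (2*p+1).succ = 2*(p+1) by omega] at h
  rw [sum_range_even _ (p+1) (fun k hk => by
    rw [g_odd_zero hk, zero_div, zero_mul])] at h
  have h2 : ∀ m ∈ Finset.range (p+1),
      (2 - 2^(2*m)) * bernoulli (2*m) / (((2*m).factorial : ℚ)) * ((1 - (-1:ℚ)^(2*p+1-2*m)) / ((2*p+1-2*m).factorial : ℚ))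
      = 2 * (((2 - 2^(2*(p-(p-m)))) * bernoulli (2*(p-(p-m))) / (((2*(p-(p-m))).factorial : ℚ))) / ((2*(p-m)+1).factorial : ℚ)) := by
    intro m hm
    rw [Finset.mem_range] at hm
    have hmp : m ≤ p := by omega
    rw [show p - (p - m) = m by omega, show 2*p+1-2*m = 2*(p-m)+1 by omega,
      pow_succ, pow_mul]
    norm_num
    ring
  rw [Finset.sum_congr rfl h2] at h
  have h3 := Finset.sum_range_reflect
    (fun m => 2 * (((2 - 2^(2*(p-m))) * bernoulli (2*(p-m)) / (((2*(p-m)).factorial : ℚ))) / ((2*m+1).factorial : ℚ))) (p+1)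
  simp only [show p+1-1 = p from rfl] at h3
  rw [show (∑ m ∈ Finset.range (p+1), 2 * (((2 - 2^(2*(p-(p-m)))) * bernoulli (2*(p-(p-m))) / (((2*(p-(p-m))).factorial : ℚ))) / ((2*(p-m)+1).factorial : ℚ))) = _ from h3] at h
  rw [← Finset.mul_sum] at h
  have := mul_left_cancel₀ (two_ne_zero (α := ℚ)) (h.trans (mul_zero 2).symm)
  exact this

theorem C_eq_bernoulli (C : ℕ → ℚ) (hC0 : C 0 = 1)
    (hCrec : ∀ p : ℕ, 1 ≤ p → ∑ q ∈ Finset.range (p + 1), C (p - q) / (Nat.factorial (2 * q + 1) : ℚ) = 0) (p : ℕ) :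
    C p = (2 - 2 ^ (2 * p)) * bernoulli (2 * p) / (Nat.factorial (2 * p) : ℚ) := by
  induction p using Nat.strong_induction_on with
  | _ p ih =>
    rcases Nat.eq_zero_or_pos p with rfl | hp
    · simp [hC0]; norm_num
    · have h1 := hCrec p hp
      have h2 := key p hp
      rw [Finset.sum_range_succ'] at h1 h2
      simp only [Nat.sub_zero] at h1 h2
      have heq : ∀ q ∈ Finset.range p,
          C (p - (q+1)) / (Nat.factorial (2 * (q+1) + 1) : ℚ)
          = ((2 - 2 ^ (2*(p-(q+1)))) * bernoulli (2*(p-(q+1))) / ((2*(p-(q+1))).factorial : ℚ))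
            / ((2*(q+1)+1).factorial : ℚ) := by
        intro q hq
        rw [ih (p - (q+1)) (by omega)]
      rw [Finset.sum_congr rfl heq] at h1
      have : C p / ((2*0+1).factorial : ℚ)
          = (2 - 2 ^ (2*p)) * bernoulli (2*p) / ((2*p).factorial : ℚ) / ((2*0+1).factorial : ℚ) := by
        linarith [h1, h2]
      simpa using this
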